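/- Let X be a first countable, zero-dimensional Hausdorff space whose underlying set is ω₁ and which is left-separated in order type ω₁ by the ordinal ordering (every initial segment of ordinals is closed). Then X has no dense relatively countably compact subset: for every dense D ⊆ X there is a countably infinite A ⊆ D that is closed and discrete in X. -/

import Mathlib

open Set

namespace Stmt4Aux

open Cardinal TopologicalSpace Filter Function Topology

noncomputable section

abbrev X₁ : Type _ := ↥(Set.Iio (Cardinal.aleph 1).ord)

lemma succ_lt_omega1 (b : X₁) : Order.succ (b : Ordinal) < (Cardinal.aleph 1).ord :=
  (Cardinal.isSuccLimit_ord (Cardinal.aleph0_le_aleph 1)).succ_lt b.2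

lemma countable_le (b : X₁) : {y : X₁ | (y : Ordinal) ≤ (b : Ordinal)}.Countable := by
  rw [Cardinal.countable_iff_lt_aleph_one]
  have h1 : #{y : X₁ | (y : Ordinal) ≤ (b : Ordinal)}
      ≤ #(Set.Iio (Order.succ (b : Ordinal))) := by
    refine Cardinal.mk_le_of_injective
      (f := fun y => ⟨(y.1 : Ordinal), Set.mem_Iio.mpr (Order.lt_succ_of_le y.2)⟩) ?_
    intro a c h
    have h2 := congrArg Subtype.val h
    exact Subtype.ext (Subtype.ext h2)
  refine lt_of_le_of_lt h1 ?_
  rw [Ordinal.mk_Iio_ordinal, Cardinal.lift_lt_aleph_one]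
  exact Cardinal.lt_ord.1 (succ_lt_omega1 b)

lemma not_countable_univ : ¬ (Set.univ : Set X₁).Countable := by
  rw [Cardinal.countable_iff_lt_aleph_one, Cardinal.mk_univ]
  rw [show #X₁ = _ from Ordinal.mk_Iio_ordinal _, Cardinal.card_ord,
    Cardinal.lift_lt_aleph_one]
  exact lt_irrefl _

lemma exists_gt {S : Set X₁} (hS : ¬ S.Countable) (b : X₁) :
    ∃ y ∈ S, (b : Ordinal) < (y : Ordinal) := by
  by_contra h
  push_neg at h
  exact hS ((countable_le b).mono (fun y hy => h y hy))

lemma nonempty_X : Nonempty X₁ := by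
  by_contra h
  haveI := not_nonempty_iff.mp h
  exact not_countable_univ Set.countable_univ

variable [t : TopologicalSpace X₁] [FirstCountableTopology X₁] [T2Space X₁]

lemma shrink (hzd : IsTopologicalBasis {s : Set X₁ | IsClopen s})
    {E : Set X₁} (hE : ¬ E.Countable) (γ : X₁) :
    ∃ W, IsClopen W ∧ γ ∈ W ∧ ¬ (E \ W).Countable := by
  obtain ⟨b, hb⟩ := (𝓝 γ).exists_antitone_basis
  have h1 : ∀ n : ℕ, ∃ W : Set X₁, IsClopen W ∧ γ ∈ W ∧ W ⊆ b n := fun n =>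
    hzd.mem_nhds_iff.1 (hb.mem n)
  choose W hW1 hW2 hW3 using h1
  by_contra h
  push_neg at h
  have hcov : E ⊆ {γ} ∪ ⋃ n, E \ W n := by
    intro y hy
    rcases eq_or_ne y γ with rfl | hne
    · exact Or.inl rfl
    · have hmem : {y}ᶜ ∈ 𝓝 γ :=
        isOpen_compl_singleton.mem_nhds (by simpa using hne.symm)
      obtain ⟨n, hn⟩ := hb.mem_iff.1 hmem
      exact Or.inr (Set.mem_iUnion.2 ⟨n, hy, fun hyW => (hn (hW3 n hyW)) rfl⟩)
  exact hE (Set.Countable.mono hcov ((Set.countable_singleton γ).union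
    (Set.countable_iUnion (fun n => h (W n) (hW1 n) (hW2 n)))))

lemma pick (hls : ∀ α : X₁, IsClosed {β : X₁ | (β : Ordinal) < (α : Ordinal)})
    {D : Set X₁} (hD : Dense D) {E : Set X₁} (hEo : IsOpen E)
    (hE : ¬ E.Countable) (c : X₁) :
    ∃ d, d ∈ D ∧ d ∈ E ∧ (c : Ordinal) < (d : Ordinal) := by
  have hset : {y : X₁ | (y : Ordinal) ≤ (c : Ordinal)}
      = {y : X₁ | (y : Ordinal) < (c : Ordinal)} ∪ {c} := by
    ext y
    simp only [Set.mem_setOf_eq, Set.mem_union, Set.mem_singleton_iff, le_iff_lt_or_eq]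
    constructor
    · rintro (h | h)
      · exact Or.inl h
      · exact Or.inr (Subtype.ext h)
    · rintro (h | rfl)
      · exact Or.inl h
      · exact Or.inr rfl
  have hcl : IsClosed {y : X₁ | (y : Ordinal) ≤ (c : Ordinal)} := by
    rw [hset]; exact (hls c).union isClosed_singleton
  have hU : IsOpen (E ∩ {y : X₁ | (y : Ordinal) ≤ (c : Ordinal)}ᶜ) :=
    hEo.inter hcl.isOpen_compl
  obtain ⟨y, hyE, hyc⟩ := exists_gt hE c
  obtain ⟨d, hdD, hdU⟩ := hD.exists_mem_open hU ⟨y, hyE, by simpa using not_le.mpr hyc⟩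
  exact ⟨d, hdD, hdU.1, not_le.1 (by simpa using hdU.2)⟩

lemma enum (d : X₁) :
    ∃ f : ℕ → X₁, ∀ y : X₁, (y : Ordinal) < (d : Ordinal) → ∃ k, f k = y := by
  have hsub2 : {y : X₁ | (y : Ordinal) < (d : Ordinal)}
      ⊆ {y : X₁ | (y : Ordinal) ≤ (d : Ordinal)} := fun y hy =>
    show (y : Ordinal) ≤ (d : Ordinal) from le_of_lt hy
  have hc : {y : X₁ | (y : Ordinal) < (d : Ordinal)}.Countable :=
    (countable_le d).mono hsub2
  rcases Set.eq_empty_or_nonempty {y : X₁ | (y : Ordinal) < (d : Ordinal)} with h | h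
  · exact ⟨fun _ => d, fun y hy => absurd (h ▸ (show y ∈ {y : X₁ | (y : Ordinal) < (d : Ordinal)} from hy)) (Set.notMem_empty y)⟩
  · obtain ⟨f, hf⟩ := Set.Countable.exists_eq_range hc h
    refine ⟨f, fun y hy => ?_⟩
    have h2 : y ∈ Set.range f := by
      rw [← hf]; exact hy
    exact h2

def NextOK (D : Set X₁) (F : X₁ → ℕ → X₁) (g : ℕ → X₁) (E : Set X₁) (n : ℕ)
    (q : X₁ × Set X₁ × Set X₁) : Prop :=
  q.1 ∈ D ∧ q.1 ∈ q.2.1 ∧ (g n : Ordinal) < (q.1 : Ordinal) ∧ q.2.1 ⊆ E ∧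
    IsClopen q.2.1 ∧ ¬ q.2.1.Countable ∧ IsOpen q.2.2 ∧
    F (g (Nat.unpair n).1) (Nat.unpair n).2 ∈ q.2.2 ∧ q.2.1 ∩ q.2.2 = ∅

lemma key (hzd : IsTopologicalBasis {s : Set X₁ | IsClopen s})
    (hls : ∀ α : X₁, IsClosed {β : X₁ | (β : Ordinal) < (α : Ordinal)})
    {D : Set X₁} (hD : Dense D) (F : X₁ → ℕ → X₁) (g : ℕ → X₁) (E : Set X₁) (n : ℕ)
    (hE1 : IsClopen E) (hE2 : ¬ E.Countable) : ∃ q, NextOK D F g E n q := by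
  obtain ⟨W, hW1, hW2, hW3⟩ := shrink hzd hE2 (F (g (Nat.unpair n).1) (Nat.unpair n).2)
  obtain ⟨d, hd1, hd2, hd3⟩ := pick hls hD (hE1.diff hW1).isOpen hW3 (g n)
  exact ⟨(d, E \ W, W), hd1, hd2, hd3, Set.diff_subset, hE1.diff hW1, hW3, hW1.isOpen,
    hW2, Set.diff_inter_self⟩

variable (hzd : IsTopologicalBasis {s : Set X₁ | IsClopen s})
    (hls : ∀ α : X₁, IsClosed {β : X₁ | (β : Ordinal) < (α : Ordinal)})
    (D : Set X₁) (hD : Dense D) (F : X₁ → ℕ → X₁) (d₀ : X₁)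

def nxt (g : ℕ → X₁) (E : Set X₁) (n : ℕ) (h1 : IsClopen E) (h2 : ¬ E.Countable) :
    X₁ × Set X₁ × Set X₁ :=
  Classical.choose (key hzd hls hD F g E n h1 h2)

lemma nxt_spec (g : ℕ → X₁) (E : Set X₁) (n : ℕ) (h1 : IsClopen E) (h2 : ¬ E.Countable) :
    NextOK D F g E n (nxt hzd hls D hD F g E n h1 h2) :=
  Classical.choose_spec (key hzd hls hD F g E n h1 h2)

def st : ℕ → {p : (ℕ → X₁) × Set X₁ // IsClopen p.2 ∧ ¬ p.2.Countable} := fun n =>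
  Nat.rec
    (⟨(fun _ => d₀, Set.univ), isClopen_univ, not_countable_univ⟩)
    (fun n p =>
      ⟨(Function.update p.1.1 (n + 1)
          (nxt hzd hls D hD F p.1.1 p.1.2 n p.2.1 p.2.2).1,
        (nxt hzd hls D hD F p.1.1 p.1.2 n p.2.1 p.2.2).2.1),
        (nxt_spec hzd hls D hD F p.1.1 p.1.2 n p.2.1 p.2.2).2.2.2.2.1,
        (nxt_spec hzd hls D hD F p.1.1 p.1.2 n p.2.1 p.2.2).2.2.2.2.2.1⟩)
    n

def dd (n : ℕ) : X₁ := (st hzd hls D hD F d₀ n).1.1 n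

def EE (n : ℕ) : Set X₁ := (st hzd hls D hD F d₀ n).1.2

lemma qq_spec (n : ℕ) :
    NextOK D F (st hzd hls D hD F d₀ n).1.1 (st hzd hls D hD F d₀ n).1.2 n
      (nxt hzd hls D hD F (st hzd hls D hD F d₀ n).1.1 (st hzd hls D hD F d₀ n).1.2 n
        (st hzd hls D hD F d₀ n).2.1 (st hzd hls D hD F d₀ n).2.2) :=
  nxt_spec hzd hls D hD F _ _ n _ _

lemma g_succ (n : ℕ) : (st hzd hls D hD F d₀ (n + 1)).1.1 =
    Function.update (st hzd hls D hD F d₀ n).1.1 (n + 1)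
      (nxt hzd hls D hD F (st hzd hls D hD F d₀ n).1.1 (st hzd hls D hD F d₀ n).1.2 n
        (st hzd hls D hD F d₀ n).2.1 (st hzd hls D hD F d₀ n).2.2).1 := rfl

lemma EE_succ (n : ℕ) : EE hzd hls D hD F d₀ (n + 1) =
    (nxt hzd hls D hD F (st hzd hls D hD F d₀ n).1.1 (st hzd hls D hD F d₀ n).1.2 n
      (st hzd hls D hD F d₀ n).2.1 (st hzd hls D hD F d₀ n).2.2).2.1 := rfl

lemma dd_succ (n : ℕ) : dd hzd hls D hD F d₀ (n + 1) =
    (nxt hzd hls D hD F (st hzd hls D hD F d₀ n).1.1 (st hzd hls D hD F d₀ n).1.2 n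
      (st hzd hls D hD F d₀ n).2.1 (st hzd hls D hD F d₀ n).2.2).1 := by
  show Function.update _ (n + 1) _ (n + 1) = _
  exact Function.update_self _ _ _

lemma g_eq : ∀ n j, j ≤ n → (st hzd hls D hD F d₀ n).1.1 j = dd hzd hls D hD F d₀ j := by
  intro n
  induction n with
  | zero => intro j hj; have : j = 0 := by omega
            subst this; rfl
  | succ n ih =>
    intro j hj
    rcases eq_or_ne j (n + 1) with rfl | hne
    · rfl
    · have hj' : j ≤ n := by omega
      have h1 : (st hzd hls D hD F d₀ (n + 1)).1.1 j = (st hzd hls D hD F d₀ n).1.1 j := by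
        rw [g_succ]
        exact Function.update_of_ne hne _ _
      rw [h1]; exact ih j hj'

lemma dd_mem_E (n : ℕ) : dd hzd hls D hD F d₀ n ∈ EE hzd hls D hD F d₀ n := by
  cases n with
  | zero => exact Set.mem_univ _
  | succ n =>
    rw [dd_succ, EE_succ]
    exact (qq_spec hzd hls D hD F d₀ n).2.1

lemma EE_anti : ∀ {n m : ℕ}, n ≤ m → EE hzd hls D hD F d₀ m ⊆ EE hzd hls D hD F d₀ n := by
  have hstep : ∀ m, EE hzd hls D hD F d₀ (m + 1) ⊆ EE hzd hls D hD F d₀ m := by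
    intro m x hx
    rw [EE_succ] at hx
    exact (qq_spec hzd hls D hD F d₀ m).2.2.2.1 hx
  intro n m h
  induction h with
  | refl => exact fun x hx => hx
  | step _ ih => exact fun x hx => ih (hstep _ hx)

lemma dd_mem_D (hd₀ : d₀ ∈ D) (n : ℕ) : dd hzd hls D hD F d₀ n ∈ D := by
  cases n with
  | zero => exact hd₀
  | succ n => rw [dd_succ]; exact (qq_spec hzd hls D hD F d₀ n).1

lemma dd_lt (n : ℕ) :
    (dd hzd hls D hD F d₀ n : Ordinal) < (dd hzd hls D hD F d₀ (n + 1) : Ordinal) := by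
  rw [dd_succ]
  have h := (qq_spec hzd hls D hD F d₀ n).2.2.1
  rwa [g_eq hzd hls D hD F d₀ n n le_rfl] at h

lemma handled (n : ℕ) : ∃ W : Set X₁, IsOpen W ∧
    F (dd hzd hls D hD F d₀ (Nat.unpair n).1) (Nat.unpair n).2 ∈ W ∧
    ∀ m, n + 1 ≤ m → dd hzd hls D hD F d₀ m ∉ W := by
  refine ⟨(nxt hzd hls D hD F (st hzd hls D hD F d₀ n).1.1 (st hzd hls D hD F d₀ n).1.2 n
      (st hzd hls D hD F d₀ n).2.1 (st hzd hls D hD F d₀ n).2.2).2.2,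
    (qq_spec hzd hls D hD F d₀ n).2.2.2.2.2.2.1, ?_, ?_⟩
  · have h := (qq_spec hzd hls D hD F d₀ n).2.2.2.2.2.2.2.1
    rwa [g_eq hzd hls D hD F d₀ n _ (Nat.unpair_left_le n)] at h
  · intro m hm hmem
    have h1 : dd hzd hls D hD F d₀ m ∈ EE hzd hls D hD F d₀ (n + 1) :=
      EE_anti hzd hls D hD F d₀ hm (dd_mem_E hzd hls D hD F d₀ m)
    rw [EE_succ] at h1
    have h2 := (qq_spec hzd hls D hD F d₀ n).2.2.2.2.2.2.2.2
    exact absurd (Set.mem_inter h1 hmem) (by rw [h2]; exact Set.notMem_empty _)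

end

end Stmt4Aux

/-- A first countable, zero-dimensional Hausdorff topology on ω₁ in which
every initial segment of ordinals is closed (left-separated in type ω₁) admits no dense
relatively countably compact subset: every dense D contains a countably infinite subset
that is closed and discrete. -/
theorem stmt_4 [t : TopologicalSpace ↥(Set.Iio (Cardinal.aleph 1).ord)]
    [FirstCountableTopology ↥(Set.Iio (Cardinal.aleph 1).ord)]
    [T2Space ↥(Set.Iio (Cardinal.aleph 1).ord)]
    (hzd : TopologicalSpace.IsTopologicalBasis
      {s : Set ↥(Set.Iio (Cardinal.aleph 1).ord) | IsClopen s})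
    (hls : ∀ α : ↥(Set.Iio (Cardinal.aleph 1).ord),
      IsClosed {β : ↥(Set.Iio (Cardinal.aleph 1).ord) | (β : Ordinal) < (α : Ordinal)})
    (D : Set ↥(Set.Iio (Cardinal.aleph 1).ord)) (hD : Dense D) :
    ∃ A ⊆ D, A.Countable ∧ A.Infinite ∧ IsClosed A ∧ DiscreteTopology ↥A := by
  classical
  obtain ⟨F, hF⟩ : ∃ F : Stmt4Aux.X₁ → ℕ → Stmt4Aux.X₁,
      ∀ (d : Stmt4Aux.X₁) (y : Stmt4Aux.X₁),
        (y : Ordinal) < (d : Ordinal) → ∃ k, F d k = y := by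
    choose F hF using Stmt4Aux.enum
    exact ⟨F, hF⟩
  have hne : Nonempty Stmt4Aux.X₁ := Stmt4Aux.nonempty_X
  obtain ⟨d₀, hd₀, -⟩ := hD.exists_mem_open isOpen_univ Set.univ_nonempty
  set dd : ℕ → Stmt4Aux.X₁ := Stmt4Aux.dd hzd hls D hD F d₀ with hdd
  have hmono : StrictMono dd := by
    refine strictMono_nat_of_lt_succ (fun n => ?_)
    exact Subtype.coe_lt_coe.1 (Stmt4Aux.dd_lt hzd hls D hD F d₀ n)
  set A : Set Stmt4Aux.X₁ := Set.range dd with hA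
  have hsub : A ⊆ D := by
    rintro _ ⟨n, rfl⟩
    exact Stmt4Aux.dd_mem_D hzd hls D hD F d₀ hd₀ n
  -- the key separation property
  have hkey : ∀ x : Stmt4Aux.X₁, ∃ U, IsOpen U ∧ x ∈ U ∧ U ∩ A ⊆ {x} := by
    intro x
    by_cases hex : ∃ j, (x : Ordinal) < (dd j : Ordinal)
    · obtain ⟨j, hj⟩ := hex
      obtain ⟨k, hk⟩ := hF (dd j) x hj
      obtain ⟨W, hWo, hWm, hWn⟩ := Stmt4Aux.handled hzd hls D hD F d₀ (Nat.pair j k)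
      rw [Nat.unpair_pair] at hWm
      have hxW : x ∈ W := by rwa [hk] at hWm
      set B : Set Stmt4Aux.X₁ := (dd '' {m | m ≤ Nat.pair j k}) \ {x} with hB
      have hBfin : B.Finite := (Set.Finite.image _ (Set.finite_Iic _)).diff
      refine ⟨W \ B, hWo.sdiff hBfin.isClosed, ⟨hxW, fun hxB => hxB.2 rfl⟩, ?_⟩
      rintro y ⟨⟨hyW, hyB⟩, ⟨m, rfl⟩⟩
      by_cases hm : m ≤ Nat.pair j k
      · by_contra hne'
        exact hyB ⟨⟨m, hm, rfl⟩, fun h => hne' h⟩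
      · exact absurd hyW (hWn m (by omega))
    · push_neg at hex
      refine ⟨{β : Stmt4Aux.X₁ | (β : Ordinal) < (x : Ordinal)}ᶜ, (hls x).isOpen_compl,
        by simp, ?_⟩
      rintro y ⟨hyU, ⟨m, rfl⟩⟩
      have h1 : ¬ ((dd m : Ordinal) < (x : Ordinal)) := hyU
      have h2 : (dd m : Ordinal) ≤ (x : Ordinal) := hex m
      have : (dd m : Ordinal) = (x : Ordinal) := le_antisymm h2 (not_lt.1 h1)
      exact Set.mem_singleton_iff.2 (Subtype.ext this)
  refine ⟨A, hsub, Set.countable_range _, Set.infinite_range_of_injective hmono.injective,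
    ?_, ?_⟩
  · refine isClosed_of_closure_subset (fun x hx => ?_)
    obtain ⟨U, hU, hxU, hUA⟩ := hkey x
    obtain ⟨y, hyU, hyA⟩ := mem_closure_iff.1 hx U hU hxU
    have : y = x := hUA ⟨hyU, hyA⟩
    rwa [← this]
  · rw [discreteTopology_iff_isOpen_singleton]
    rintro ⟨x, hx⟩
    obtain ⟨U, hU, hxU, hUA⟩ := hkey x
    have hset : {(⟨x, hx⟩ : ↥A)} = (Subtype.val : ↥A → Stmt4Aux.X₁) ⁻¹' U := by
      ext z
      simp only [Set.mem_singleton_iff, Set.mem_preimage]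
      constructor
      · rintro rfl; exact hxU
      · intro hz
        exact Subtype.ext (hUA ⟨hz, z.2⟩)
    rw [hset]
    exact hU.preimage continuous_subtype_val
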